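/- Assume a* > 0 and 0 < β < β_max. Let c̄ ∈ (0, c₁max) be the unique point with g₁(c̄) = H'(c̄). Then the unique minimizer of g over D is (c̄, ζ(c̄)); in particular, the optimal lower barrier c₁* = c̄ is strictly positive. -/

import Mathlib

theorem stmt_13
    (H H' : ℝ → ℝ)
    (hHcont : ContinuousOn H (Set.Ici 0))
    (hHderiv : ∀ x ∈ Set.Ioi (0:ℝ), HasDerivAt H (H' x) x)
    (hH'pos : ∀ x ∈ Set.Ioi (0:ℝ), 0 < H' x)
    (hH'cont : ContinuousOn H' (Set.Ici 0))
    (hH'top : Filter.Tendsto H' Filter.atTop Filter.atTop)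
    (β : ℝ) (hβ : 0 < β)
    (astar : ℝ) (hastar : 0 ≤ astar)
    (hH'dec : StrictAntiOn H' (Set.Ioo 0 astar))
    (hH'inc : StrictMonoOn H' (Set.Ioi astar))
    (hH'conv : ConvexOn ℝ (Set.Ioi 0) H')
    (hastar0 : 0 < astar)
    (ζ : ℝ → ℝ)
    (hζ : ∀ x ∈ Set.Ioo 0 astar, ζ x ∈ Set.Ioi astar ∧ H' (ζ x) = H' x)
    (c1max : ℝ)
    (hc1max₁ : (∃ x ∈ Set.Ioo 0 astar, ζ x - x ≤ β) →
      c1max = sInf {x | x ∈ Set.Ioo 0 astar ∧ ζ x - x ≤ β})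
    (hc1max₂ : (¬ ∃ x ∈ Set.Ioo 0 astar, ζ x - x ≤ β) → c1max = astar)
    (g₁ : ℝ → ℝ) (hg₁ : ∀ x, g₁ x = (H (ζ x) - H x) / (ζ x - x - β))
    (z₀ βmax : ℝ) (hz₀ : z₀ ∈ Set.Ioi astar ∧ H' z₀ = H' 0)
    (hβmax : βmax = z₀ - (H z₀ - H 0) / H' 0)
    (hβlt : β < βmax)
    (cbar : ℝ) (hcbar : cbar ∈ Set.Ioo 0 c1max) (hcbar' : g₁ cbar = H' cbar)
    (hcbaru : ∀ z ∈ Set.Ioo 0 c1max, g₁ z = H' z → z = cbar)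
    :
    (0 ≤ cbar ∧ cbar + β < ζ cbar) ∧
      (∀ d₁ d₂ : ℝ, 0 ≤ d₁ → d₁ + β < d₂ →
        (H (ζ cbar) - H cbar) / (ζ cbar - cbar - β) ≤ (H d₂ - H d₁) / (d₂ - d₁ - β)) ∧
      (∀ c₁ c₂ : ℝ, 0 ≤ c₁ → c₁ + β < c₂ →
        (∀ d₁ d₂ : ℝ, 0 ≤ d₁ → d₁ + β < d₂ →
          (H c₂ - H c₁) / (c₂ - c₁ - β) ≤ (H d₂ - H d₁) / (d₂ - d₁ - β)) →
        c₁ = cbar ∧ c₂ = ζ cbar) ∧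
      0 < cbar := by
  -- basic positions
  have hc1max_le : c1max ≤ astar := by
    by_cases hS : ∃ x ∈ Set.Ioo 0 astar, ζ x - x ≤ β
    · obtain ⟨x, hx, hxβ⟩ := hS
      rw [hc1max₁ ⟨x, hx, hxβ⟩]
      exact le_trans (csInf_le ⟨0, fun y hy => hy.1.1.le⟩ ⟨hx, hxβ⟩) hx.2.le
    · rw [hc1max₂ hS]
  have hcbar_pos : 0 < cbar := hcbar.1
  have hcbar_lt : cbar < astar := lt_of_lt_of_le hcbar.2 hc1max_le
  have hcbar_mem : cbar ∈ Set.Ioo 0 astar := ⟨hcbar_pos, hcbar_lt⟩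
  obtain ⟨hζc_mem, hζc_eq⟩ := hζ cbar hcbar_mem
  set zc := ζ cbar with hzc
  have hazc : astar < zc := hζc_mem
  have hzc_pos : 0 < zc := lt_trans hastar0 hazc
  set m := H' cbar with hm
  have hm_pos : 0 < m := hH'pos cbar hcbar_pos
  -- β-gap at cbar
  have hβlt' : cbar + β < zc := by
    by_contra hcon
    push_neg at hcon
    have hmemS : cbar ∈ {x | x ∈ Set.Ioo 0 astar ∧ ζ x - x ≤ β} :=
      ⟨hcbar_mem, by rw [← hzc]; linarith⟩
    have hle : c1max ≤ cbar := by
      rw [hc1max₁ ⟨cbar, hcbar_mem, by rw [← hzc]; linarith⟩]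
      exact csInf_le ⟨0, fun y hy => hy.1.1.le⟩ hmemS
    linarith [hcbar.2]
  have hdenom : 0 < zc - cbar - β := by linarith
  -- key identity
  have h1 : (H zc - H cbar) / (zc - cbar - β) = m := by rw [hzc, ← hcbar', hg₁]
  have hkey : H zc - H cbar = m * (zc - cbar - β) := (div_eq_iff hdenom.ne').mp h1
  -- the auxiliary function φ
  set φ : ℝ → ℝ := fun x => H x - m * x with hφdef
  have hφx : ∀ x, φ x = H x - m * x := fun x => rfl
  have hφζ : φ zc = φ cbar - m * β := by
    rw [hφx, hφx]; linear_combination hkey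
  have hφderiv : ∀ x ∈ Set.Ioi (0:ℝ), HasDerivAt φ (H' x - m) x := by
    intro x hx
    have h := (hHderiv x hx).sub ((hasDerivAt_id x).const_mul m)
    rw [mul_one] at h; exact h
  have hφcont : ContinuousOn φ (Set.Ici 0) :=
    hHcont.sub ((continuous_const.mul continuous_id).continuousOn)
  -- H strictly monotone on [0,∞)
  have hHmono : StrictMonoOn H (Set.Ici 0) := by
    apply strictMonoOn_of_deriv_pos (convex_Ici 0) hHcont
    intro x hx
    rw [interior_Ici] at hx
    rw [(hHderiv x hx).deriv]
    exact hH'pos x hx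
  -- φ strictly monotone on [0, cbar]
  have hmono1 : StrictMonoOn φ (Set.Icc 0 cbar) := by
    apply strictMonoOn_of_deriv_pos (convex_Icc 0 cbar)
      (hφcont.mono (Set.Icc_subset_Ici_self))
    intro x hx
    rw [interior_Icc] at hx
    rw [(hφderiv x hx.1).deriv]
    have := hH'dec ⟨hx.1, lt_trans hx.2 hcbar_lt⟩ hcbar_mem hx.2
    rw [← hm] at this; linarith
  -- φ strictly antitone on [cbar, astar]
  have hanti1 : StrictAntiOn φ (Set.Icc cbar astar) := by
    apply strictAntiOn_of_deriv_neg (convex_Icc cbar astar)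
      (hφcont.mono (fun y hy => le_trans hcbar_pos.le hy.1))
    intro x hx
    rw [interior_Icc] at hx
    rw [(hφderiv x (lt_trans hcbar_pos hx.1)).deriv]
    have := hH'dec hcbar_mem ⟨lt_trans hcbar_pos hx.1, hx.2⟩ hx.1
    rw [← hm] at this; linarith
  -- φ strictly antitone on [astar, zc]
  have hanti2 : StrictAntiOn φ (Set.Icc astar zc) := by
    apply strictAntiOn_of_deriv_neg (convex_Icc astar zc)
      (hφcont.mono (fun y hy => le_trans hastar0.le hy.1))
    intro x hx
    rw [interior_Icc] at hx
    rw [(hφderiv x (lt_trans hastar0 hx.1)).deriv]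
    have := hH'inc (Set.mem_Ioi.mpr hx.1) (Set.mem_Ioi.mpr hazc) hx.2
    rw [hζc_eq] at this; linarith
  -- glued: φ strictly antitone on [cbar, zc]
  have hanti : StrictAntiOn φ (Set.Icc cbar zc) := by
    intro x hx y hy hxy
    rcases le_total y astar with h | h
    · exact hanti1 ⟨hx.1, hxy.le.trans h⟩ ⟨hy.1, h⟩ hxy
    · rcases le_total x astar with h' | h'
      · have k1 : φ astar ≤ φ x := by
          rcases h'.lt_or_eq with hlt | heq
          · exact (hanti1 ⟨hx.1, h'⟩ ⟨hcbar_lt.le, le_refl _⟩ hlt).le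
          · rw [heq]
        have k2 : φ y ≤ φ astar := by
          rcases (lt_or_eq_of_le h) with hlt | heq
          · exact (hanti2 ⟨le_refl _, hazc.le⟩ ⟨h, hy.2⟩ hlt).le
          · rw [← heq]
        rcases lt_or_ge x astar with hx' | hx'
        · have := hanti1 ⟨hx.1, hx'.le⟩ ⟨hcbar_lt.le, le_refl _⟩ hx'
          linarith
        · have hx'' : x = astar := le_antisymm h' hx'
          have hy' : astar < y := hx'' ▸ hxy
          have := hanti2 ⟨le_refl _, hazc.le⟩ ⟨hy'.le, hy.2⟩ hy'
          rw [hx'']; linarith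
      · exact hanti2 ⟨h', hx.2⟩ ⟨le_trans h' hxy.le, hy.2⟩ hxy
  -- φ strictly monotone on [zc, ∞)
  have hmono2 : StrictMonoOn φ (Set.Ici zc) := by
    apply strictMonoOn_of_deriv_pos (convex_Ici zc)
      (hφcont.mono (fun y hy => le_trans hzc_pos.le hy))
    intro x hx
    rw [interior_Ici] at hx
    rw [(hφderiv x (lt_trans hzc_pos hx)).deriv]
    have := hH'inc (Set.mem_Ioi.mpr hazc) (Set.mem_Ioi.mpr (lt_trans hazc hx)) hx
    rw [hζc_eq] at this; linarith
  -- maximum of φ on [0, zc] is at cbar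
  have hmax : ∀ x ∈ Set.Icc (0:ℝ) zc, x ≠ cbar → φ x < φ cbar := by
    intro x hx hne
    rcases lt_or_gt_of_ne hne with hlt | hgt
    · exact hmono1 ⟨hx.1, hlt.le⟩ ⟨hcbar_pos.le, le_refl _⟩ hlt
    · exact hanti ⟨le_refl _, hcbar_lt.le.trans hazc.le⟩ ⟨hgt.le, hx.2⟩ hgt
  have hmax' : ∀ x ∈ Set.Icc (0:ℝ) zc, φ x ≤ φ cbar := by
    intro x hx
    by_cases hne : x = cbar
    · rw [hne]
    · exact (hmax x hx hne).le
  -- main inequality with equality characterization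
  have hmain : ∀ d₁ d₂ : ℝ, 0 ≤ d₁ → d₁ + β < d₂ →
      φ d₁ - m * β ≤ φ d₂ ∧ (φ d₂ = φ d₁ - m * β → d₁ = cbar ∧ d₂ = zc) := by
    intro d₁ d₂ hd₁ hd₂
    have hstep : φ d₁ - m * β < φ (d₁ + β) := by
      have hh : H d₁ < H (d₁ + β) :=
        hHmono hd₁ (by simp only [Set.mem_Ici]; linarith) (by linarith)
      rw [hφx, hφx]; nlinarith
    rcases lt_or_ge d₁ zc with hd₁lt | hd₁ge
    · have hφd₁ : φ d₁ ≤ φ cbar := hmax' d₁ ⟨hd₁, hd₁lt.le⟩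
      rcases le_or_gt zc d₂ with hcase | hcase
      · -- d₂ ≥ zc
        have h2 : φ zc ≤ φ d₂ := by
          rcases hcase.lt_or_eq with hlt | heq
          · exact (hmono2 (le_refl zc) hlt.le hlt).le
          · rw [heq]
        constructor
        · linarith [hφζ]
        · intro heq
          have e1 : φ d₁ = φ cbar := by linarith [hφζ]
          have e2 : φ d₂ = φ zc := by linarith [hφζ]
          constructor
          · by_contra hne
            exact absurd e1 (hmax d₁ ⟨hd₁, hd₁lt.le⟩ hne).ne
          · rcases hcase.lt_or_eq with hlt | heq'
            · exact absurd e2.symm (hmono2 (le_refl zc) hlt.le hlt).ne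
            · exact heq'.symm
      · -- d₂ < zc : always strict
        have hstrict : φ d₁ - m * β < φ d₂ := by
          rcases le_or_gt d₂ cbar with h | h
          · have hle2 : φ (d₁ + β) ≤ φ d₂ :=
              (hmono1 ⟨by linarith, by linarith⟩ ⟨by linarith, h⟩ hd₂).le
            linarith
          · have := hanti ⟨h.le, hcase.le⟩ ⟨hcbar_lt.le.trans hazc.le, le_refl _⟩ hcase
            linarith [hφζ]
        exact ⟨hstrict.le, fun heq => absurd heq hstrict.ne'⟩
    · -- d₁ ≥ zc : strict
      have h3 : φ d₁ < φ d₂ := hmono2 (Set.mem_Ici.mpr hd₁ge) (Set.mem_Ici.mpr (by linarith)) (by linarith)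
      have hmβ : 0 < m * β := mul_pos hm_pos hβ
      exact ⟨by linarith, fun heq => absurd heq (by linarith)⟩
  -- part 2
  have hpart2 : ∀ d₁ d₂ : ℝ, 0 ≤ d₁ → d₁ + β < d₂ →
      (H zc - H cbar) / (zc - cbar - β) ≤ (H d₂ - H d₁) / (d₂ - d₁ - β) := by
    intro d₁ d₂ hd₁ hd₂
    rw [h1]
    rw [le_div_iff₀ (by linarith : (0:ℝ) < d₂ - d₁ - β)]
    have := (hmain d₁ d₂ hd₁ hd₂).1
    rw [hφx, hφx] at this
    nlinarith
  refine ⟨⟨hcbar_pos.le, hβlt'⟩, hpart2, ?_, hcbar_pos⟩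
  -- part 3: uniqueness
  intro c₁ c₂ h01 h12 hPmin
  have hA := hPmin cbar zc hcbar_pos.le hβlt'
  have hB := hpart2 c₁ c₂ h01 h12
  have heq : (H c₂ - H c₁) / (c₂ - c₁ - β) = m := by
    rw [h1] at hA hB; linarith
  have hval : H c₂ - H c₁ = m * (c₂ - c₁ - β) :=
    (div_eq_iff (by linarith : (c₂ - c₁ - β) ≠ 0)).mp heq
  have hφeq : φ c₂ = φ c₁ - m * β := by
    rw [hφx, hφx]; linear_combination hval
  exact (hmain c₁ c₂ h01 h12).2 hφeq
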